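/- arXiv:1107.5281 — 3 statements merged into one kernel-verified Lean document; each statement's English description precedes it below -/
import Mathlib

section
/- Let K be an imaginary quadratic field, n ≥ 1 an integer, and x ∈ Kˣ. If the principal fractional ideal x·𝓞_K is the (n+1)-st power of some fractional ideal of K, then N_{K/ℚ}(x) is an (n+1)-st power in ℚˣ. -/
open NumberField
open scoped nonZeroDivisors

theorem norm_pos_of_imag_quad (K : Type*) [Field K] [NumberField K]
    (h2 : Module.finrank ℚ K = 2) (hre : IsEmpty (K →+* ℝ))
    (x : K) (hx : x ≠ 0) : 0 < Algebra.norm ℚ x := by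
  have hcard : Fintype.card (K →+* ℂ) = 2 := by
    rw [NumberField.Embeddings.card K ℂ, h2]
  classical
  have hcard' : (Finset.univ : Finset (K →+* ℂ)).card = 2 := by
    rw [Finset.card_univ, hcard]
  obtain ⟨a, b, hab, huniv⟩ := Finset.card_eq_two.mp hcard'
  have hanr : NumberField.ComplexEmbedding.conjugate a ≠ a := by
    intro h
    exact hre.elim (NumberField.ComplexEmbedding.IsReal.embedding
      (NumberField.ComplexEmbedding.isReal_iff.mpr h))
  have hb : b = NumberField.ComplexEmbedding.conjugate a := by
    have : NumberField.ComplexEmbedding.conjugate a ∈ (Finset.univ : Finset (K →+* ℂ)) :=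
      Finset.mem_univ _
    rw [huniv, Finset.mem_insert, Finset.mem_singleton] at this
    rcases this with h | h
    · exact absurd h hanr
    · exact h.symm
  have hprod : (algebraMap ℚ ℂ) (Algebra.norm ℚ x) = ∏ σ : K →+* ℂ, σ x := by
    rw [Algebra.norm_eq_prod_embeddings ℚ ℂ x]
    exact (Fintype.prod_equiv (RingHom.equivRatAlgHom K ℂ) (fun σ : K →+* ℂ => σ x)
      (fun φ : K →ₐ[ℚ] ℂ => φ x) (fun _ => rfl)).symm
  rw [show (Finset.univ : Finset (K →+* ℂ)) = {a, b} from huniv,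
    Finset.prod_insert (by simp [hab]), Finset.prod_singleton, hb] at hprod
  have : (algebraMap ℚ ℂ) (Algebra.norm ℚ x) = (Complex.normSq (a x) : ℝ) := by
    rw [hprod]
    exact Complex.mul_conj (a x)
  have hre' : (Algebra.norm ℚ x : ℝ) = Complex.normSq (a x) := by
    have := congrArg Complex.re this
    simpa using this
  have hne : Algebra.norm ℚ x ≠ 0 := by
    simp [Algebra.norm_ne_zero_iff, hx]
  have : (0 : ℝ) < Algebra.norm ℚ x := by
    rw [hre']
    exact Complex.normSq_pos.mpr (by simp [map_ne_zero, hx])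
  exact_mod_cast this

/-- If `K` is imaginary quadratic and the principal fractional ideal `x𝓞_K` is an
`(n+1)`-st power of a fractional ideal, then `N_{K/ℚ}(x)` is an `(n+1)`-st power in `ℚˣ`. -/
theorem stmt2 (K : Type*) [Field K] [NumberField K]
    (h2 : Module.finrank ℚ K = 2) (hre : IsEmpty (K →+* ℝ))
    (n : ℕ) (hn : 1 ≤ n)
    (x : Kˣ)
    (hx : ∃ I : FractionalIdeal (𝓞 K)⁰ K,
        FractionalIdeal.spanSingleton (𝓞 K)⁰ (x : K) = I ^ (n + 1)) :
    ∃ q : ℚˣ, Algebra.norm ℚ (x : K) = (q : ℚ) ^ (n + 1) := by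
  obtain ⟨I, hI⟩ := hx
  have hx0 : (x : K) ≠ 0 := x.ne_zero
  have hnormpos := norm_pos_of_imag_quad K h2 hre (x : K) hx0
  have habs : FractionalIdeal.absNorm (FractionalIdeal.spanSingleton (𝓞 K)⁰ (x : K))
      = |Algebra.norm ℚ (x : K)| := FractionalIdeal.absNorm_span_singleton _ _
  rw [hI, map_pow] at habs
  have hq0 : FractionalIdeal.absNorm I ≠ 0 := by
    intro h
    rw [h, zero_pow (Nat.succ_ne_zero n), eq_comm, abs_eq_zero] at habs
    exact hnormpos.ne' habs
  refine ⟨Units.mk0 _ hq0, ?_⟩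
  rw [Units.val_mk0, habs, abs_of_pos hnormpos]
end

section
/- Let K be an imaginary quadratic field and n ≥ 1 an integer. Let 𝐋_{n+1} be the subgroup of Kˣ consisting of those x such that N_{K/ℚ}(x) is an (n+1)-st power in ℚˣ and the principal fractional ideal x·𝓞_K is the (n+1)-st power of a fractional ideal of K. Then (Kˣ)^{n+1} ⊆ 𝐋_{n+1} and the cardinality of the quotient group 𝐋_{n+1}/(Kˣ)^{n+1} equals h_{K,n+1} · |μ_{n+1}(K)|. -/
open NumberField
open scoped nonZeroDivisors

noncomputable section AuxStmt4

variable {K : Type*} [Field K] [NumberField K]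

lemma aux_norm_eq_mul_conj (h2 : Module.finrank ℚ K = 2) (hre : IsEmpty (K →+* ℝ))
    (φ : K →+* ℂ) (x : K) :
    (algebraMap ℚ ℂ) (Algebra.norm ℚ x) = φ x * (starRingEnd ℂ) (φ x) := by
  classical
  have hcard : Fintype.card (K →+* ℂ) = 2 := by
    rw [NumberField.Embeddings.card K ℂ, h2]
  have hne : φ ≠ ComplexEmbedding.conjugate φ := by
    intro h
    exact hre.elim (ComplexEmbedding.isReal_iff.mpr h.symm).embedding
  have huniv : (Finset.univ : Finset (K →+* ℂ)) = {φ, ComplexEmbedding.conjugate φ} := by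
    symm
    apply Finset.eq_univ_of_card
    rw [Finset.card_insert_of_notMem (by simpa using hne), Finset.card_singleton, hcard]
  rw [Algebra.norm_eq_prod_embeddings ℚ ℂ x,
    ← Fintype.prod_equiv (RingHom.equivRatAlgHom K ℂ) (fun ψ : K →+* ℂ => ψ x)
      (fun σ : K →ₐ[ℚ] ℂ => σ x) (fun ψ => by simp [RingHom.equivRatAlgHom_apply])]
  rw [show (∏ ψ : K →+* ℂ, ψ x) = ∏ ψ ∈ (Finset.univ : Finset (K →+* ℂ)), ψ x from rfl, huniv,
    Finset.prod_pair hne]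
  rfl

lemma aux_norm_pos (h2 : Module.finrank ℚ K = 2) (hre : IsEmpty (K →+* ℝ))
    {x : K} (hx : x ≠ 0) : 0 < Algebra.norm ℚ x := by
  have hcard : Fintype.card (K →+* ℂ) = 2 := by
    rw [NumberField.Embeddings.card K ℂ, h2]
  have : Nonempty (K →+* ℂ) := Fintype.card_pos_iff.mp (by omega)
  obtain ⟨φ⟩ := this
  have h := aux_norm_eq_mul_conj h2 hre φ x
  rw [Complex.mul_conj] at h
  have h' : ((Algebra.norm ℚ x : ℚ) : ℂ) = ((Complex.normSq (φ x) : ℝ) : ℂ) := by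
    rw [← h]; norm_cast
  have h2' : ((Algebra.norm ℚ x : ℚ) : ℝ) = Complex.normSq (φ x) := by
    exact_mod_cast h'
  have hpos : 0 < Complex.normSq (φ x) := Complex.normSq_pos.mpr (map_ne_zero φ |>.mpr hx)
  rw [← h2'] at hpos
  exact_mod_cast hpos

lemma aux_normSq (h2 : Module.finrank ℚ K = 2) (hre : IsEmpty (K →+* ℝ))
    (φ : K →+* ℂ) (x : K) : Complex.normSq (φ x) = ((Algebra.norm ℚ x : ℚ) : ℝ) := by
  have h := aux_norm_eq_mul_conj h2 hre φ x
  rw [Complex.mul_conj] at h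
  have h' : ((Algebra.norm ℚ x : ℚ) : ℂ) = ((Complex.normSq (φ x) : ℝ) : ℂ) := by
    rw [← h]; norm_cast
  exact_mod_cast h'.symm
lemma aux_norm_unit (h2 : Module.finrank ℚ K = 2) (hre : IsEmpty (K →+* ℝ))
    (u : (𝓞 K)ˣ) : Algebra.norm ℚ ((u : 𝓞 K) : K) = 1 := by
  have habs : |Algebra.norm ℚ ((u : 𝓞 K) : K)| = 1 := by
    have := NumberField.isUnit_iff_norm.mp u.isUnit
    rwa [RingOfIntegers.coe_norm] at this
  have hne : ((u : 𝓞 K) : K) ≠ 0 := by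
    simpa using (map_ne_zero (algebraMap (𝓞 K) K)).mpr u.ne_zero
  have := aux_norm_pos h2 hre hne
  rwa [abs_of_pos this] at habs

lemma aux_units_finite (h2 : Module.finrank ℚ K = 2) (hre : IsEmpty (K →+* ℝ)) :
    Finite (𝓞 K)ˣ := by
  have hmem : ∀ u : (𝓞 K)ˣ, u ∈ NumberField.Units.torsion K := by
    intro u
    rw [NumberField.Units.torsion, CommGroup.mem_torsion]
    have hnorm : ∀ φ : K →+* ℂ, ‖φ ((u : 𝓞 K) : K)‖ = 1 := by
      intro φ
      have h1 : Complex.normSq (φ ((u : 𝓞 K) : K)) = 1 := by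
        rw [aux_normSq h2 hre, aux_norm_unit h2 hre u]; norm_num
      have h2' : ‖φ ((u : 𝓞 K) : K)‖ ^ 2 = 1 := by
        rw [Complex.sq_norm, h1]
      have h0 : (0:ℝ) ≤ ‖φ ((u : 𝓞 K) : K)‖ := norm_nonneg _
      nlinarith
    obtain ⟨k, hk, hku⟩ := NumberField.Embeddings.pow_eq_one_of_norm_eq_one K ℂ
      (RingOfIntegers.isIntegral_coe (u : 𝓞 K)) hnorm
    refine isOfFinOrder_iff_pow_eq_one.mpr ⟨k, hk, ?_⟩
    ext
    push_cast
    exact_mod_cast hku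
  exact Finite.of_injective (fun u => (⟨u, hmem u⟩ : NumberField.Units.torsion K))
    (fun a b h => by simpa using h)

lemma aux_card_quot_pow (G : Type*) [CommGroup G] [Finite G] (m : ℕ) :
    Nat.card (G ⧸ (powMonoidHom m : G →* G).range) = Nat.card ((powMonoidHom m : G →* G).ker) := by
  have h1 := Subgroup.card_eq_card_quotient_mul_card_subgroup (powMonoidHom m : G →* G).range
  have h2 := Subgroup.card_eq_card_quotient_mul_card_subgroup (powMonoidHom m : G →* G).ker
  have h3 : Nat.card (G ⧸ (powMonoidHom m : G →* G).ker) =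
      Nat.card (powMonoidHom m : G →* G).range :=
    Nat.card_congr (QuotientGroup.quotientKerEquivRange _).toEquiv
  have hr : 0 < Nat.card (powMonoidHom m : G →* G).range := Nat.card_pos
  rw [h3] at h2
  rw [h2] at h1
  rw [mul_comm (Nat.card (G ⧸ (powMonoidHom m : G →* G).range)) _] at h1
  exact (Nat.eq_of_mul_eq_mul_left hr h1).symm

lemma aux_roots_card (m : ℕ) (hm : m ≠ 0) :
    Nat.card ((powMonoidHom m : (𝓞 K)ˣ →* (𝓞 K)ˣ).ker) = Nat.card {x : K // x ^ m = 1} := by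
  refine Nat.card_eq_of_bijective
    (fun u : ((powMonoidHom m : (𝓞 K)ˣ →* (𝓞 K)ˣ).ker) => (⟨((u : (𝓞 K)ˣ) : 𝓞 K) , by
      have hu : ((u : (𝓞 K)ˣ)) ^ m = 1 := by
        have h := u.2
        rwa [MonoidHom.mem_ker, powMonoidHom_apply] at h
      have h := congrArg (fun v : (𝓞 K)ˣ => ((v : 𝓞 K) : K)) hu
      push_cast at h
      exact h⟩ : {x : K // x ^ m = 1})) ?_
  constructor
  · intro a b hab
    have : (((a : (𝓞 K)ˣ) : 𝓞 K) : K) = (((b : (𝓞 K)ˣ) : 𝓞 K) : K) := by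
      simpa using congrArg Subtype.val hab
    ext
    exact_mod_cast this
  · rintro ⟨x, hx⟩
    have hxne : x ≠ 0 := by
      intro h0
      rw [h0, zero_pow hm] at hx
      exact zero_ne_one hx
    have hint : IsIntegral ℤ x := by
      refine ⟨Polynomial.X ^ m - Polynomial.C 1, ?_, ?_⟩
      · apply Polynomial.monic_X_pow_sub_C _ hm
      · rw [Polynomial.eval₂_sub, Polynomial.eval₂_X_pow, Polynomial.eval₂_C, hx]
        simp
    obtain ⟨y, hy⟩ := IsIntegralClosure.isIntegral_iff (A := 𝓞 K).mp hint
    have hym : y ^ m = 1 := by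
      have : algebraMap (𝓞 K) K (y ^ m) = algebraMap (𝓞 K) K 1 := by
        rw [map_pow, hy, map_one, hx]
      exact (IsFractionRing.injective (𝓞 K) K) this
    have hyu : IsUnit y := by
      refine IsUnit.of_mul_eq_one (a := y) (y ^ (m-1)) ?_
      rw [← pow_succ']
      have hm1 : m - 1 + 1 = m := by omega
      rw [hm1]
      exact hym
    refine ⟨⟨hyu.unit, ?_⟩, ?_⟩
    · have h1 : hyu.unit ^ m = 1 := by
        ext
        push_cast
        exact_mod_cast hym
      simpa [powMonoidHom, MonoidHom.mem_ker] using h1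
    · ext
      simpa using hy

lemma aux_ideal_pow_inj {m : ℕ} (hm : m ≠ 0) {I J : Ideal (𝓞 K)} (hI : I ≠ 0)
    (h : I ^ m = J ^ m) : I = J := by
  classical
  have hJ : J ≠ 0 := by
    rintro rfl
    rw [zero_pow hm] at h
    exact hI (pow_eq_zero_iff hm |>.mp h)
  have hfac := congrArg (UniqueFactorizationMonoid.normalizedFactors) h
  rw [UniqueFactorizationMonoid.normalizedFactors_pow,
    UniqueFactorizationMonoid.normalizedFactors_pow] at hfac
  have hfac' : UniqueFactorizationMonoid.normalizedFactors I =
      UniqueFactorizationMonoid.normalizedFactors J := by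
    ext a
    have := congrArg (Multiset.count a) hfac
    rw [Multiset.count_nsmul, Multiset.count_nsmul] at this
    exact Nat.eq_of_mul_eq_mul_left (Nat.pos_of_ne_zero hm) this
  have hI' := UniqueFactorizationMonoid.prod_normalizedFactors hI
  have hJ' := UniqueFactorizationMonoid.prod_normalizedFactors hJ
  rw [hfac'] at hI'
  exact associated_iff_eq.mp (hI'.symm.trans hJ')

lemma aux_frac_pow_inj {m : ℕ} (hm : m ≠ 0) {I J : FractionalIdeal (𝓞 K)⁰ K} (hI : I ≠ 0)
    (h : I ^ m = J ^ m) : I = J := by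
  have hJ : J ≠ 0 := by
    rintro rfl
    rw [zero_pow hm] at h
    exact hI (pow_eq_zero_iff hm |>.mp h)
  obtain ⟨a, A, ha, hIA⟩ := I.exists_eq_spanSingleton_mul
  obtain ⟨b, B, hb, hJB⟩ := J.exists_eq_spanSingleton_mul
  have hsa : FractionalIdeal.spanSingleton (𝓞 K)⁰ (algebraMap (𝓞 K) K a) ≠ 0 := by
    rw [Ne, FractionalIdeal.spanSingleton_eq_zero_iff]
    exact fun h0 => ha (IsFractionRing.to_map_eq_zero_iff.mp h0)
  have hsb : FractionalIdeal.spanSingleton (𝓞 K)⁰ (algebraMap (𝓞 K) K b) ≠ 0 := by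
    rw [Ne, FractionalIdeal.spanSingleton_eq_zero_iff]
    exact fun h0 => hb (IsFractionRing.to_map_eq_zero_iff.mp h0)
  have hA : (A : FractionalIdeal (𝓞 K)⁰ K) ≠ 0 := by
    intro h0; rw [h0, mul_zero] at hIA; exact hI hIA
  have hB : (B : FractionalIdeal (𝓞 K)⁰ K) ≠ 0 := by
    intro h0; rw [h0, mul_zero] at hJB; exact hJ hJB
  have hIA' : I = (A : FractionalIdeal (𝓞 K)⁰ K) / FractionalIdeal.spanSingleton (𝓞 K)⁰ (algebraMap (𝓞 K) K a) := by
    rw [hIA, div_eq_mul_inv, mul_comm, FractionalIdeal.spanSingleton_inv]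
  have hJB' : J = (B : FractionalIdeal (𝓞 K)⁰ K) / FractionalIdeal.spanSingleton (𝓞 K)⁰ (algebraMap (𝓞 K) K b) := by
    rw [hJB, div_eq_mul_inv, mul_comm, FractionalIdeal.spanSingleton_inv]
  rw [hIA', hJB', div_pow, div_pow, div_eq_div_iff (pow_ne_zero _ hsa) (pow_ne_zero _ hsb)] at h
  rw [hIA', hJB', div_eq_div_iff hsa hsb]
  rw [← mul_pow, ← mul_pow] at h
  rw [← FractionalIdeal.coeIdeal_span_singleton, ← FractionalIdeal.coeIdeal_mul,
    ← FractionalIdeal.coeIdeal_span_singleton a, ← FractionalIdeal.coeIdeal_mul,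
    ← FractionalIdeal.coeIdeal_pow, ← FractionalIdeal.coeIdeal_pow,
    FractionalIdeal.coeIdeal_inj] at h
  have hAb : A * Ideal.span {b} ≠ 0 := by
    apply mul_ne_zero
    · intro h0; rw [h0] at hA; simp at hA
    · simpa using hb
  have := aux_ideal_pow_inj hm hAb h
  rw [← FractionalIdeal.coeIdeal_span_singleton, ← FractionalIdeal.coeIdeal_mul,
    ← FractionalIdeal.coeIdeal_span_singleton a, ← FractionalIdeal.coeIdeal_mul,
    FractionalIdeal.coeIdeal_inj]
  exact this
variable {m : ℕ} {L : Subgroup Kˣ}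

section Phi

variable (hex : ∀ x : L, ∃ I : FractionalIdeal (𝓞 K)⁰ K,
  FractionalIdeal.spanSingleton (𝓞 K)⁰ ((x : Kˣ) : K) = I ^ m)

noncomputable def chooseIdl (x : L) : FractionalIdeal (𝓞 K)⁰ K := (hex x).choose

lemma chooseIdl_spec (x : L) :
    FractionalIdeal.spanSingleton (𝓞 K)⁰ ((x : Kˣ) : K) = (chooseIdl hex x) ^ m :=
  (hex x).choose_spec

variable (hm : m ≠ 0)
include hm

lemma chooseIdl_ne_zero (x : L) : chooseIdl hex x ≠ 0 := by
  intro h0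
  have := chooseIdl_spec hex x
  rw [h0, zero_pow hm, FractionalIdeal.spanSingleton_eq_zero_iff] at this
  exact Units.ne_zero _ this

lemma chooseIdl_unique (x : L) {I : FractionalIdeal (𝓞 K)⁰ K}
    (hI : FractionalIdeal.spanSingleton (𝓞 K)⁰ ((x : Kˣ) : K) = I ^ m) :
    I = chooseIdl hex x := by
  have h0 : I ≠ 0 := by
    intro h0
    rw [h0, zero_pow hm, FractionalIdeal.spanSingleton_eq_zero_iff] at hI
    exact Units.ne_zero _ hI
  exact aux_frac_pow_inj hm h0 (hI.symm.trans (chooseIdl_spec hex x))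

noncomputable def Phi : L →* ClassGroup (𝓞 K) where
  toFun x := ClassGroup.mk K (Units.mk0 (chooseIdl hex x) (chooseIdl_ne_zero hex hm x))
  map_one' := by
    have h1 : (1 : FractionalIdeal (𝓞 K)⁰ K) = chooseIdl hex 1 := by
      apply chooseIdl_unique hex hm
      simp
    have h2 : Units.mk0 (chooseIdl hex 1) (chooseIdl_ne_zero hex hm 1) = 1 :=
      Units.ext (by rw [Units.val_mk0, Units.val_one, ← h1])
    show ClassGroup.mk K (Units.mk0 (chooseIdl hex 1) (chooseIdl_ne_zero hex hm 1)) = 1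
    rw [h2, map_one]
  map_mul' x y := by
    have h1 : chooseIdl hex x * chooseIdl hex y = chooseIdl hex (x * y) := by
      apply chooseIdl_unique hex hm
      rw [mul_pow, ← chooseIdl_spec hex x, ← chooseIdl_spec hex y,
        FractionalIdeal.spanSingleton_mul_spanSingleton]
      rfl
    have h2 : Units.mk0 (chooseIdl hex (x*y)) (chooseIdl_ne_zero hex hm (x*y)) =
        Units.mk0 (chooseIdl hex x) (chooseIdl_ne_zero hex hm x) *
        Units.mk0 (chooseIdl hex y) (chooseIdl_ne_zero hex hm y) :=
      Units.ext (by rw [Units.val_mk0, Units.val_mul, Units.val_mk0, Units.val_mk0, ← h1])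
    show ClassGroup.mk K (Units.mk0 (chooseIdl hex (x*y)) (chooseIdl_ne_zero hex hm (x*y))) = _
    rw [h2, map_mul]

lemma Phi_eq (x : L) {I : FractionalIdeal (𝓞 K)⁰ K} (h0 : I ≠ 0)
    (hI : FractionalIdeal.spanSingleton (𝓞 K)⁰ ((x : Kˣ) : K) = I ^ m) :
    Phi hex hm x = ClassGroup.mk K (Units.mk0 I h0) := by
  have h1 := chooseIdl_unique hex hm x hI
  have h2 : Units.mk0 I h0 = Units.mk0 (chooseIdl hex x) (chooseIdl_ne_zero hex hm x) :=
    Units.ext (by rw [Units.val_mk0, Units.val_mk0, ← h1])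
  show ClassGroup.mk K (Units.mk0 (chooseIdl hex x) (chooseIdl_ne_zero hex hm x)) = _
  rw [h2]

end Phi

theorem aux_main (h2 : Module.finrank ℚ K = 2) (hre : IsEmpty (K →+* ℝ))
    (m : ℕ) (hm : m ≠ 0) (L : Subgroup Kˣ)
    (hL : ∀ x : Kˣ, x ∈ L ↔
      ((∃ q : ℚˣ, Algebra.norm ℚ (x : K) = (q : ℚ) ^ m) ∧
        ∃ I : FractionalIdeal (𝓞 K)⁰ K,
          FractionalIdeal.spanSingleton (𝓞 K)⁰ (x : K) = I ^ m)) :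
    (powMonoidHom m : Kˣ →* Kˣ).range ≤ L ∧
    Nat.card (L ⧸ ((powMonoidHom m : Kˣ →* Kˣ).range.subgroupOf L)) =
      Nat.card ((powMonoidHom m :
          ClassGroup (𝓞 K) →* ClassGroup (𝓞 K)).ker) *
        Nat.card {x : K // x ^ m = 1} := by
  classical
  -- part 1
  have hle : (powMonoidHom m : Kˣ →* Kˣ).range ≤ L := by
    rintro w ⟨y, rfl⟩
    rw [hL]
    have hn0 : Algebra.norm ℚ ((y : Kˣ) : K) ≠ 0 :=
      Algebra.norm_ne_zero_iff.mpr y.ne_zero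
    constructor
    · refine ⟨Units.mk0 (Algebra.norm ℚ ((y : Kˣ) : K)) hn0, ?_⟩
      rw [powMonoidHom_apply, Units.val_pow_eq_pow_val, map_pow]
      rfl
    · refine ⟨FractionalIdeal.spanSingleton (𝓞 K)⁰ ((y : Kˣ) : K), ?_⟩
      rw [powMonoidHom_apply, Units.val_pow_eq_pow_val, FractionalIdeal.spanSingleton_pow]
  refine ⟨hle, ?_⟩
  have hex : ∀ x : L, ∃ I : FractionalIdeal (𝓞 K)⁰ K,
      FractionalIdeal.spanSingleton (𝓞 K)⁰ ((x : Kˣ) : K) = I ^ m :=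
    fun x => ((hL x).mp x.2).2
  set P : Subgroup L := (powMonoidHom m : Kˣ →* Kˣ).range.subgroupOf L with hP
  -- Phi kills P
  have hPle : ∀ x : L, x ∈ P → Phi hex hm x = 1 := by
    intro x hx
    rw [hP, Subgroup.mem_subgroupOf] at hx
    obtain ⟨y, hy⟩ := hx
    have h0 : FractionalIdeal.spanSingleton (𝓞 K)⁰ ((y : Kˣ) : K) ≠ 0 := by
      rw [Ne, FractionalIdeal.spanSingleton_eq_zero_iff]
      exact y.ne_zero
    have hspan : FractionalIdeal.spanSingleton (𝓞 K)⁰ ((x : Kˣ) : K) =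
        (FractionalIdeal.spanSingleton (𝓞 K)⁰ ((y : Kˣ) : K)) ^ m := by
      rw [FractionalIdeal.spanSingleton_pow, ← hy, powMonoidHom_apply,
        Units.val_pow_eq_pow_val]
    rw [Phi_eq hex hm x h0 hspan]
    refine ClassGroup.mk_eq_one_iff.mpr ⟨⟨((y : Kˣ) : K), ?_⟩⟩
    rw [Units.val_mk0, FractionalIdeal.coe_spanSingleton]
  set Φ' : (L ⧸ P) →* ClassGroup (𝓞 K) := QuotientGroup.lift P (Phi hex hm) (show P ≤ (Phi hex hm).ker from hPle) with hΦ'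
  -- range of Φ' is the m-torsion
  have hrange : Φ'.range =
      (powMonoidHom m : ClassGroup (𝓞 K) →* ClassGroup (𝓞 K)).ker := by
    ext c
    simp only [MonoidHom.mem_range, MonoidHom.mem_ker, powMonoidHom_apply]
    constructor
    · rintro ⟨q, rfl⟩
      obtain ⟨x, rfl⟩ := QuotientGroup.mk'_surjective P q
      rw [hΦ', QuotientGroup.mk'_apply, QuotientGroup.lift_mk']
      show (ClassGroup.mk K (Units.mk0 (chooseIdl hex x) (chooseIdl_ne_zero hex hm x))) ^ m = 1
      rw [← map_pow]
      refine ClassGroup.mk_eq_one_iff.mpr ⟨⟨((x : Kˣ) : K), ?_⟩⟩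
      rw [Units.val_pow_eq_pow_val, Units.val_mk0]
      have := congrArg (fun J : FractionalIdeal (𝓞 K)⁰ K => (J : Submodule (𝓞 K) K))
        (chooseIdl_spec hex x)
      rw [← this, FractionalIdeal.coe_spanSingleton]
    · intro hc
      obtain ⟨I0, hI0⟩ := ClassGroup.mk0_surjective (R := 𝓞 K) c
      set U : (FractionalIdeal (𝓞 K)⁰ K)ˣ := FractionalIdeal.mk0 K I0 with hUdef
      have hU : ClassGroup.mk K U = c := (ClassGroup.mk_mk0 K I0).trans hI0
      have h1 : ClassGroup.mk K (U ^ m) = 1 := by rw [map_pow, hU, hc]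
      obtain ⟨x, hx⟩ := (ClassGroup.mk_eq_one_iff.mp h1).principal
      rw [Units.val_pow_eq_pow_val] at hx
      have hxne : x ≠ 0 := by
        rintro rfl
        apply pow_ne_zero m (Units.ne_zero U)
        rw [← FractionalIdeal.coeToSubmodule_eq_bot, hx]
        exact Submodule.span_zero_singleton _
      have hUX : ((U : FractionalIdeal (𝓞 K)⁰ K)) ^ m =
          FractionalIdeal.spanSingleton (𝓞 K)⁰ x := by
        apply FractionalIdeal.coeToSubmodule_injective
        show FractionalIdeal.coeToSubmodule ((U : FractionalIdeal (𝓞 K)⁰ K) ^ m) =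
          FractionalIdeal.coeToSubmodule (FractionalIdeal.spanSingleton (𝓞 K)⁰ x)
        rw [FractionalIdeal.coe_spanSingleton, ← hx]
      set xu : Kˣ := Units.mk0 x hxne with hxu
      have hUne : (U : FractionalIdeal (𝓞 K)⁰ K) ≠ 0 := Units.ne_zero U
      have hxL : xu ∈ L := by
        rw [hL]
        constructor
        · have hq0 : FractionalIdeal.absNorm (U : FractionalIdeal (𝓞 K)⁰ K) ≠ 0 := by
            rw [Ne, FractionalIdeal.absNorm_eq_zero_iff]
            exact hUne
          refine ⟨Units.mk0 (FractionalIdeal.absNorm (U : FractionalIdeal (𝓞 K)⁰ K)) hq0, ?_⟩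
          have e1 : |Algebra.norm ℚ x| =
              FractionalIdeal.absNorm ((U : FractionalIdeal (𝓞 K)⁰ K) ^ m) := by
            rw [hUX, FractionalIdeal.absNorm_span_singleton]
          rw [map_pow] at e1
          rw [abs_of_pos (aux_norm_pos h2 hre hxne)] at e1
          exact e1
        · exact ⟨(U : FractionalIdeal (𝓞 K)⁰ K), hUX.symm⟩
      refine ⟨QuotientGroup.mk' P ⟨xu, hxL⟩, ?_⟩
      rw [hΦ', QuotientGroup.mk'_apply, QuotientGroup.lift_mk']
      rw [Phi_eq hex hm ⟨xu, hxL⟩ hUne hUX.symm]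
      rw [show Units.mk0 (U : FractionalIdeal (𝓞 K)⁰ K) hUne = U from Units.ext rfl, hU]
  -- the unit map
  set θ0 : (𝓞 K)ˣ →* Kˣ := Units.map (algebraMap (𝓞 K) K : (𝓞 K) →* K) with hθ0def
  have hθ0coe : ∀ u : (𝓞 K)ˣ, ((θ0 u : Kˣ) : K) = algebraMap (𝓞 K) K (u : 𝓞 K) :=
    fun u => rfl
  have hunit_spanone : ∀ u : (𝓞 K)ˣ,
      FractionalIdeal.spanSingleton (𝓞 K)⁰ (algebraMap (𝓞 K) K (u : 𝓞 K)) = 1 := by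
    intro u
    rw [← FractionalIdeal.coeIdeal_span_singleton,
      Ideal.span_singleton_eq_top.mpr u.isUnit, FractionalIdeal.coeIdeal_top]
  have hθ0L : ∀ u : (𝓞 K)ˣ, θ0 u ∈ L := by
    intro u
    rw [hL]
    constructor
    · exact ⟨1, by rw [hθ0coe, aux_norm_unit h2 hre u]; simp⟩
    · exact ⟨1, by rw [one_pow, hθ0coe]; exact hunit_spanone u⟩
  set θL : (𝓞 K)ˣ →* L := θ0.codRestrict L hθ0L with hθLdef
  set θ : (𝓞 K)ˣ →* (L ⧸ P) := (QuotientGroup.mk' P).comp θL with hθdef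
  -- kernel of Φ' is the range of θ
  have hker' : Φ'.ker = θ.range := by
    ext q
    constructor
    · intro hq
      obtain ⟨x, rfl⟩ := QuotientGroup.mk'_surjective P q
      rw [MonoidHom.mem_ker, hΦ', QuotientGroup.mk'_apply, QuotientGroup.lift_mk'] at hq
      have h1 : ClassGroup.mk K (Units.mk0 (chooseIdl hex x) (chooseIdl_ne_zero hex hm x)) = 1 := hq
      obtain ⟨y, hy⟩ := (ClassGroup.mk_eq_one_iff.mp h1).principal
      rw [Units.val_mk0] at hy
      have hcy : chooseIdl hex x = FractionalIdeal.spanSingleton (𝓞 K)⁰ y := by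
        apply FractionalIdeal.coeToSubmodule_injective
        show FractionalIdeal.coeToSubmodule (chooseIdl hex x) =
          FractionalIdeal.coeToSubmodule (FractionalIdeal.spanSingleton (𝓞 K)⁰ y)
        rw [FractionalIdeal.coe_spanSingleton, ← hy]
      have hy0 : y ≠ 0 := by
        rintro rfl
        apply chooseIdl_ne_zero hex hm x
        rw [hcy, FractionalIdeal.spanSingleton_eq_zero_iff]
      have hspany : FractionalIdeal.spanSingleton (𝓞 K)⁰ ((x : Kˣ) : K) =
          FractionalIdeal.spanSingleton (𝓞 K)⁰ (y ^ m) := by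
        rw [chooseIdl_spec hex x, hcy, FractionalIdeal.spanSingleton_pow]
      obtain ⟨z, hz⟩ := FractionalIdeal.spanSingleton_eq_spanSingleton.mp hspany
      have hz' : algebraMap (𝓞 K) K (z : 𝓞 K) * ((x : Kˣ) : K) = y ^ m := by
        rw [← Algebra.smul_def]; exact hz
      set yu : Kˣ := Units.mk0 y hy0 with hyu
      have hx_eq : (x : Kˣ) = θ0 z⁻¹ * yu ^ m := by
        apply Units.ext
        rw [Units.val_mul, Units.val_pow_eq_pow_val, hθ0coe, hyu, Units.val_mk0]
        have hinv : algebraMap (𝓞 K) K ((z⁻¹ : (𝓞 K)ˣ) : 𝓞 K) *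
            algebraMap (𝓞 K) K (z : 𝓞 K) = 1 := by
          rw [← map_mul, ← Units.val_mul, inv_mul_cancel, Units.val_one, map_one]
        calc ((x : Kˣ) : K) = (algebraMap (𝓞 K) K ((z⁻¹ : (𝓞 K)ˣ) : 𝓞 K) *
            algebraMap (𝓞 K) K (z : 𝓞 K)) * ((x : Kˣ) : K) := by rw [hinv, one_mul]
        _ = algebraMap (𝓞 K) K ((z⁻¹ : (𝓞 K)ˣ) : 𝓞 K) * y ^ m := by
            rw [mul_assoc, hz']
      have hymL : yu ^ m ∈ L := hle ⟨yu, rfl⟩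
      have hxsplit : x = θL z⁻¹ * ⟨yu ^ m, hymL⟩ := by
        apply Subtype.ext
        rw [hx_eq]
        rfl
      refine ⟨z⁻¹, ?_⟩
      rw [hθdef, MonoidHom.comp_apply, QuotientGroup.mk'_apply, QuotientGroup.mk'_apply]
      rw [hxsplit]
      have hmemP : (⟨yu ^ m, hymL⟩ : L) ∈ P := by
        rw [hP, Subgroup.mem_subgroupOf]
        exact ⟨yu, rfl⟩
      rw [QuotientGroup.mk_mul]
      have : ((⟨yu ^ m, hymL⟩ : L) : L ⧸ P) = 1 := (QuotientGroup.eq_one_iff _).mpr hmemP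
      rw [this]
      exact (mul_one (((θL z⁻¹ : L) : L ⧸ P))).symm
    · rintro ⟨u, rfl⟩
      rw [MonoidHom.mem_ker, hθdef, MonoidHom.comp_apply, hΦ', QuotientGroup.mk'_apply]
      have : (QuotientGroup.lift P (Phi hex hm) (show P ≤ (Phi hex hm).ker from hPle)) ((θL u : L) : L ⧸ P) =
          Phi hex hm (θL u) := QuotientGroup.lift_mk' P (show P ≤ (Phi hex hm).ker from hPle) (θL u)
      rw [this]
      have hspan1 : FractionalIdeal.spanSingleton (𝓞 K)⁰ (((θL u : L) : Kˣ) : K) =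
          (1 : FractionalIdeal (𝓞 K)⁰ K) ^ m := by
        rw [one_pow]
        exact hunit_spanone u
      rw [Phi_eq hex hm _ one_ne_zero hspan1]
      rw [show Units.mk0 (1 : FractionalIdeal (𝓞 K)⁰ K) one_ne_zero = 1 from Units.ext rfl,
        map_one]
  -- kernel of θ is the image of m-th powers
  have hinj : Function.Injective (algebraMap (𝓞 K) K) := IsFractionRing.injective (𝓞 K) K
  have hθ0inj : Function.Injective θ0 := Units.map_injective hinj
  have hker2 : θ.ker = (powMonoidHom m : (𝓞 K)ˣ →* (𝓞 K)ˣ).range := by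
    ext u
    constructor
    · intro hu
      rw [MonoidHom.mem_ker, hθdef, MonoidHom.comp_apply, QuotientGroup.mk'_apply] at hu
      have hmem := (QuotientGroup.eq_one_iff (θL u)).mp hu
      rw [hP, Subgroup.mem_subgroupOf] at hmem
      obtain ⟨y, hy⟩ := hmem
      rw [powMonoidHom_apply] at hy
      have hy' : ((y : Kˣ) : K) ^ m = algebraMap (𝓞 K) K (u : 𝓞 K) := by
        have := congrArg (fun w : Kˣ => (w : K)) hy
        simpa [Units.val_pow_eq_pow_val] using this.trans (hθ0coe u)
      have hyint : IsIntegral (𝓞 K) ((y : Kˣ) : K) := by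
        refine ⟨Polynomial.X ^ m - Polynomial.C (u : 𝓞 K), ?_, ?_⟩
        · exact Polynomial.monic_X_pow_sub_C _ hm
        · rw [Polynomial.eval₂_sub, Polynomial.eval₂_X_pow, Polynomial.eval₂_C, hy']
          simp
      have hyint2 : IsIntegral ℤ ((y : Kˣ) : K) := isIntegral_trans _ hyint
      obtain ⟨w, hw⟩ := IsIntegralClosure.isIntegral_iff (A := 𝓞 K).mp hyint2
      have hwm : w ^ m = (u : 𝓞 K) := hinj (by rw [map_pow, hw, hy'])
      have hwu : IsUnit w := by
        refine (isUnit_pow_iff hm).mp ?_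
        rw [hwm]
        exact u.isUnit
      refine ⟨hwu.unit, ?_⟩
      rw [powMonoidHom_apply]
      apply Units.ext
      rw [Units.val_pow_eq_pow_val, IsUnit.unit_spec]
      exact hwm
    · rintro ⟨w, rfl⟩
      rw [MonoidHom.mem_ker, hθdef, MonoidHom.comp_apply, QuotientGroup.mk'_apply]
      refine (QuotientGroup.eq_one_iff _).mpr ?_
      rw [hP, Subgroup.mem_subgroupOf]
      refine ⟨θ0 w, ?_⟩
      rw [powMonoidHom_apply]
      have : θL (powMonoidHom m w) = (θL w) ^ m := by
        rw [powMonoidHom_apply, map_pow]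
      rw [this]
      rfl
  -- cardinalities
  haveI : Finite (𝓞 K)ˣ := aux_units_finite h2 hre
  calc Nat.card (L ⧸ P)
      = Nat.card ((L ⧸ P) ⧸ Φ'.ker) * Nat.card Φ'.ker :=
        Subgroup.card_eq_card_quotient_mul_card_subgroup Φ'.ker
    _ = Nat.card Φ'.range * Nat.card Φ'.ker := by
        rw [Nat.card_congr (QuotientGroup.quotientKerEquivRange Φ').toEquiv]
    _ = Nat.card ((powMonoidHom m : ClassGroup (𝓞 K) →* ClassGroup (𝓞 K)).ker) *
        Nat.card θ.range := by rw [hrange, hker']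
    _ = Nat.card ((powMonoidHom m : ClassGroup (𝓞 K) →* ClassGroup (𝓞 K)).ker) *
        Nat.card {x : K // x ^ m = 1} := by
        congr 1
        rw [← Nat.card_congr (QuotientGroup.quotientKerEquivRange θ).toEquiv, hker2,
          aux_card_quot_pow _ m, aux_roots_card m hm]

end AuxStmt4

/-- For `K` imaginary quadratic, the subgroup `𝐋_{n+1}` of `Kˣ` (elements whose norm is an
`(n+1)`-st power in `ℚˣ` and whose principal fractional ideal is an `(n+1)`-st power)
contains `(Kˣ)^{n+1}` and the quotient `𝐋_{n+1}/(Kˣ)^{n+1}` has cardinality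
`h_{K,n+1} ⬝ |μ_{n+1}(K)|`. -/
theorem stmt4 (K : Type*) [Field K] [NumberField K]
    (h2 : Module.finrank ℚ K = 2) (hre : IsEmpty (K →+* ℝ))
    (n : ℕ) (hn : 1 ≤ n)
    (L : Subgroup Kˣ)
    (hL : ∀ x : Kˣ, x ∈ L ↔
      ((∃ q : ℚˣ, Algebra.norm ℚ (x : K) = (q : ℚ) ^ (n + 1)) ∧
        ∃ I : FractionalIdeal (𝓞 K)⁰ K,
          FractionalIdeal.spanSingleton (𝓞 K)⁰ (x : K) = I ^ (n + 1))) :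
    (powMonoidHom (n + 1) : Kˣ →* Kˣ).range ≤ L ∧
    Nat.card (L ⧸ ((powMonoidHom (n + 1) : Kˣ →* Kˣ).range.subgroupOf L)) =
      Nat.card ((powMonoidHom (n + 1) :
          ClassGroup (𝓞 K) →* ClassGroup (𝓞 K)).ker) *
        Nat.card {x : K // x ^ (n + 1) = 1} := by
  exact aux_main h2 hre (n + 1) (Nat.succ_ne_zero n) L hL
end

section
/- Let χ₃ denote the unique nontrivial Dirichlet character modulo 3. Then (-1)^5 · (2·10/2^9) · ζ(-9) · ∏_{j=1}^{4} ζ(1-2j)·L(χ₃, -2j) = 809/5746705367040. -/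
open Finset

private lemma bern5 : bernoulli' 5 = 0 := bernoulli'_eq_zero_of_odd (by decide) (by norm_num)
private lemma bern7 : bernoulli' 7 = 0 := bernoulli'_eq_zero_of_odd (by decide) (by norm_num)
private lemma bern9 : bernoulli' 9 = 0 := bernoulli'_eq_zero_of_odd (by decide) (by norm_num)

private lemma bern6 : bernoulli' 6 = 1 / 42 := by
  rw [bernoulli'_def]
  norm_num [Finset.sum_range_succ, bern5, show Nat.choose 6 2 = 15 from rfl, show Nat.choose 6 4 = 15 from rfl]

private lemma bern8 : bernoulli' 8 = -1 / 30 := by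
  rw [bernoulli'_def]
  norm_num [Finset.sum_range_succ, bern5, bern6, bern7, show Nat.choose 8 2 = 28 from rfl, show Nat.choose 8 4 = 70 from rfl, show Nat.choose 8 6 = 28 from rfl]

private lemma bern10 : bernoulli' 10 = 5 / 66 := by
  rw [bernoulli'_def]
  norm_num [Finset.sum_range_succ, bern5, bern6, bern7, bern8, bern9, show Nat.choose 10 2 = 45 from rfl, show Nat.choose 10 4 = 210 from rfl, show Nat.choose 10 6 = 210 from rfl, show Nat.choose 10 8 = 45 from rfl]

private lemma bpoly_eval (m : ℕ) (q : ℚ) :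
    ((Polynomial.bernoulli m).map (algebraMap ℚ ℂ)).eval ((q : ℝ) : ℂ) =
      (((Polynomial.bernoulli m).eval q : ℚ) : ℂ) := by
  have h : ((q : ℝ) : ℂ) = algebraMap ℚ ℂ q := by
    rw [Complex.ofReal_ratCast, eq_ratCast]
  rw [h, Polynomial.eval_map, Polynomial.eval₂_at_apply, eq_ratCast]

private lemma diff3 :
    (Polynomial.bernoulli 3).eval (1/3 : ℚ) - (Polynomial.bernoulli 3).eval (2/3 : ℚ) = 2/27 := by
  simp [Polynomial.bernoulli, Finset.sum_range_succ, Polynomial.eval_monomial, _root_.bernoulli]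
  norm_num

private lemma diff5 :
    (Polynomial.bernoulli 5).eval (1/3 : ℚ) - (Polynomial.bernoulli 5).eval (2/3 : ℚ) = -10/243 := by
  simp [Polynomial.bernoulli, Finset.sum_range_succ, Polynomial.eval_monomial, _root_.bernoulli, bern5, show Nat.choose 5 2 = 10 from rfl]
  norm_num

private lemma diff7 :
    (Polynomial.bernoulli 7).eval (1/3 : ℚ) - (Polynomial.bernoulli 7).eval (2/3 : ℚ) = 98/2187 := by
  simp [Polynomial.bernoulli, Finset.sum_range_succ, Polynomial.eval_monomial, _root_.bernoulli,
    bern5, bern6, bern7, show Nat.choose 7 2 = 21 from rfl, show Nat.choose 7 4 = 35 from rfl]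
  norm_num

private lemma diff9 :
    (Polynomial.bernoulli 9).eval (1/3 : ℚ) - (Polynomial.bernoulli 9).eval (2/3 : ℚ) = -1618/19683 := by
  simp [Polynomial.bernoulli, Finset.sum_range_succ, Polynomial.eval_monomial, _root_.bernoulli,
    bern5, bern6, bern7, bern8, bern9, show Nat.choose 9 2 = 36 from rfl, show Nat.choose 9 4 = 126 from rfl, show Nat.choose 9 6 = 84 from rfl]
  norm_num

private lemma chi_two {χ : DirichletCharacter ℂ 3} (hχ : χ ≠ 1) : χ 2 = -1 := by
  have h : χ 2 * χ 2 = 1 := by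
    rw [← map_mul, show (2 : ZMod 3) * 2 = 1 by decide, map_one]
  rcases mul_self_eq_one_iff.mp h with h1 | h1
  · exfalso
    apply hχ
    apply MulChar.ext
    have key : ∀ a : (ZMod 3)ˣ, (a : ZMod 3) = 1 ∨ (a : ZMod 3) = 2 := by decide
    intro a
    rcases key a with ha | ha
    · rw [MulChar.one_apply_coe, ha, map_one]
    · rw [MulChar.one_apply_coe, ha, h1]
  · exact h1

private lemma Lval {χ : DirichletCharacter ℂ 3} (hχ : χ ≠ 1) (n : ℕ) (hn : n ≠ 0) (d : ℚ)
    (hd : (Polynomial.bernoulli (n + 1)).eval (1/3 : ℚ)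
        - (Polynomial.bernoulli (n + 1)).eval (2/3 : ℚ) = d) :
    χ.LFunction (-(n : ℂ)) = 3 ^ n * (-1 / (n + 1)) * (d : ℂ) := by
  have h0 : χ 0 = 0 := χ.map_nonunit (by decide)
  have h1 : χ 1 = 1 := map_one χ
  have h2 : χ 2 = -1 := chi_two hχ
  rw [DirichletCharacter.LFunction, ZMod.LFunction]
  rw [show (∑ j : ZMod 3, χ j * HurwitzZeta.hurwitzZeta (ZMod.toAddCircle j) (-(n : ℂ)))
      = χ 0 * HurwitzZeta.hurwitzZeta (ZMod.toAddCircle (0 : ZMod 3)) (-(n : ℂ))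
      + χ 1 * HurwitzZeta.hurwitzZeta (ZMod.toAddCircle (1 : ZMod 3)) (-(n : ℂ))
      + χ 2 * HurwitzZeta.hurwitzZeta (ZMod.toAddCircle (2 : ZMod 3)) (-(n : ℂ))
    from Fin.sum_univ_three _]
  have e1 : ZMod.toAddCircle (1 : ZMod 3) = ((((1/3 : ℚ) : ℝ)) : UnitAddCircle) := by
    rw [ZMod.toAddCircle_apply, show ((1 : ZMod 3).val) = 1 from rfl]
    norm_num
  have e2 : ZMod.toAddCircle (2 : ZMod 3) = ((((2/3 : ℚ) : ℝ)) : UnitAddCircle) := by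
    rw [ZMod.toAddCircle_apply, show ((2 : ZMod 3).val) = 2 from rfl]
    norm_num
  rw [e1, e2, HurwitzZeta.hurwitzZeta_neg_nat hn (by constructor <;> norm_num),
    HurwitzZeta.hurwitzZeta_neg_nat hn (by constructor <;> norm_num),
    bpoly_eval, bpoly_eval, h0, h1, h2, neg_neg, Complex.cpow_natCast]
  have : ((((Polynomial.bernoulli (n+1)).eval (1/3 : ℚ) : ℚ) : ℂ)
      - (((Polynomial.bernoulli (n+1)).eval (2/3 : ℚ) : ℚ) : ℂ)) = (d : ℂ) := by
    rw [← Rat.cast_sub, hd]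
  push_cast
  push_cast at this
  ring_nf
  ring_nf at this
  linear_combination (-1 / ((n : ℂ) + 1)) * (3:ℂ)^n * this

/-- The minimal Euler–Poincaré characteristic in dimension 9:
`(-1)^5 · (2·10/2^9) · ζ(-9) · ∏_{j=1}^{4} ζ(1-2j)·L(χ₃,-2j) = 809/5746705367040`. -/
theorem stmt12 (χ₃ : DirichletCharacter ℂ 3) (hχ₃ : χ₃ ≠ 1) :
    (-1 : ℂ) ^ 5 * (2 * 10 / 2 ^ 9) * riemannZeta (-9) *
        ∏ j ∈ Finset.Icc (1 : ℕ) 4,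
          riemannZeta (1 - 2 * (j : ℂ)) * χ₃.LFunction (-(2 * (j : ℂ))) =
      809 / 5746705367040 := by
  have hz9 : riemannZeta (-9 : ℂ) = -1 / 132 := by
    rw [show (-9 : ℂ) = -((9 : ℕ) : ℂ) by norm_num, riemannZeta_neg_nat_eq_bernoulli' 9,
      show (9 : ℕ) + 1 = 10 from rfl, bern10]
    push_cast
    norm_num
  have hz1 : riemannZeta (1 - 2 * ((1 : ℕ) : ℂ)) = -1 / 12 := by
    rw [show 1 - 2 * ((1 : ℕ) : ℂ) = -((1 : ℕ) : ℂ) by push_cast; ring, riemannZeta_neg_nat_eq_bernoulli' 1,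
      show (1 : ℕ) + 1 = 2 from rfl, bernoulli'_two]
    push_cast
    norm_num
  have hz3 : riemannZeta (1 - 2 * ((2 : ℕ) : ℂ)) = 1 / 120 := by
    rw [show 1 - 2 * ((2 : ℕ) : ℂ) = -((3 : ℕ) : ℂ) by push_cast; ring, riemannZeta_neg_nat_eq_bernoulli' 3,
      show (3 : ℕ) + 1 = 4 from rfl, bernoulli'_four]
    push_cast
    norm_num
  have hz5 : riemannZeta (1 - 2 * ((3 : ℕ) : ℂ)) = -1 / 252 := by
    rw [show 1 - 2 * ((3 : ℕ) : ℂ) = -((5 : ℕ) : ℂ) by push_cast; ring, riemannZeta_neg_nat_eq_bernoulli' 5,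
      show (5 : ℕ) + 1 = 6 from rfl, bern6]
    push_cast
    norm_num
  have hz7 : riemannZeta (1 - 2 * ((4 : ℕ) : ℂ)) = 1 / 240 := by
    rw [show 1 - 2 * ((4 : ℕ) : ℂ) = -((7 : ℕ) : ℂ) by push_cast; ring, riemannZeta_neg_nat_eq_bernoulli' 7,
      show (7 : ℕ) + 1 = 8 from rfl, bern8]
    push_cast
    norm_num
  have hL2 : χ₃.LFunction (-(2 * ((1 : ℕ) : ℂ))) = -2 / 9 := by
    rw [show -(2 * ((1 : ℕ) : ℂ)) = -((2 : ℕ) : ℂ) by push_cast; ring,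
      Lval hχ₃ 2 (by norm_num) (2/27) (by rw [show (2 : ℕ) + 1 = 3 from rfl]; exact diff3)]
    push_cast
    norm_num
  have hL4 : χ₃.LFunction (-(2 * ((2 : ℕ) : ℂ))) = 2 / 3 := by
    rw [show -(2 * ((2 : ℕ) : ℂ)) = -((4 : ℕ) : ℂ) by push_cast; ring,
      Lval hχ₃ 4 (by norm_num) (-10/243) (by rw [show (4 : ℕ) + 1 = 5 from rfl]; exact diff5)]
    push_cast
    norm_num
  have hL6 : χ₃.LFunction (-(2 * ((3 : ℕ) : ℂ))) = -14 / 3 := by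
    rw [show -(2 * ((3 : ℕ) : ℂ)) = -((6 : ℕ) : ℂ) by push_cast; ring,
      Lval hχ₃ 6 (by norm_num) (98/2187) (by rw [show (6 : ℕ) + 1 = 7 from rfl]; exact diff7)]
    push_cast
    norm_num
  have hL8 : χ₃.LFunction (-(2 * ((4 : ℕ) : ℂ))) = 1618 / 27 := by
    rw [show -(2 * ((4 : ℕ) : ℂ)) = -((8 : ℕ) : ℂ) by push_cast; ring,
      Lval hχ₃ 8 (by norm_num) (-1618/19683) (by rw [show (8 : ℕ) + 1 = 9 from rfl]; exact diff9)]
    push_cast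
    norm_num
  rw [show Finset.Icc (1 : ℕ) 4 = {1, 2, 3, 4} from rfl,
    Finset.prod_insert (by decide), Finset.prod_insert (by decide),
    Finset.prod_insert (by decide), Finset.prod_singleton,
    hz9, hz1, hz3, hz5, hz7, hL2, hL4, hL6, hL8]
  norm_num
end
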